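/- Existence of a small leader set: Let n ≥ 10 and b be integers with (log₂ n)^{10} ≤ b ≤ n and such that 15·(ln n)/(ln b) is an even integer ≥ 4. Let S_1,…,S_n be subsets of {1,…,n} with |S_i| = b and i ∈ S_i for every i. Then there exists a subset L ⊆ {1,…,n} with |L| ≤ 2·n·b^{−1/5} such that S_i ∩ L ≠ ∅ for every i ∈ {1,…,n}. -/
import Mathlib


lemma greedy_hitting (n b : ℕ) (hn : 0 < n) (hbn : b ≤ n)
    (S : Fin n → Finset (Fin n)) (hScard : ∀ i, (S i).card = b) :
    ∀ t : ℕ, ∀ F : Finset (Fin n),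
      (F.card : ℝ) * ((n - b : ℕ) : ℝ) ^ t < (n : ℝ) ^ t →
      ∃ L : Finset (Fin n), L.card ≤ t ∧ ∀ i ∈ F, (S i ∩ L).Nonempty := by
  intro t
  induction t with
  | zero =>
    intro F hF
    simp only [pow_zero, mul_one] at hF
    have : F.card = 0 := by exact_mod_cast Nat.lt_one_iff.mp (by exact_mod_cast hF)
    refine ⟨∅, le_refl 0, ?_⟩
    intro i hi
    simp [Finset.card_eq_zero.mp this] at hi
  | succ t ih =>
    intro F hF
    rcases F.eq_empty_or_nonempty with rfl | hFne
    · exact ⟨∅, Nat.zero_le _, by simp⟩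
    -- double counting
    have hcount : ∑ x : Fin n, (F.filter (fun i => x ∈ S i)).card = F.card * b := by
      simp only [Finset.card_filter]
      rw [Finset.sum_comm]
      have : ∀ i ∈ F, (∑ x : Fin n, if x ∈ S i then 1 else 0) = b := by
        intro i _
        rw [← Finset.card_filter]
        simp [Finset.filter_mem_eq_inter, hScard i]
      rw [Finset.sum_congr rfl this]
      simp [mul_comm]
    obtain ⟨x, -, hx⟩ : ∃ x ∈ (Finset.univ : Finset (Fin n)),
        F.card * b ≤ n * (F.filter (fun i => x ∈ S i)).card := by
      apply Finset.exists_le_of_sum_le (Finset.univ_nonempty_iff.mpr ⟨⟨0, hn⟩⟩)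
      have : (∑ x : Fin n, n * (F.filter (fun i => x ∈ S i)).card)
          = ∑ _x : Fin n, F.card * b := by
        rw [← Finset.mul_sum, hcount]
        simp [Finset.sum_const, Finset.card_univ, mul_comm, mul_left_comm, mul_assoc]
      rw [this]
    set F' := F.filter (fun i => x ∉ S i) with hF'
    have hsplit : (F.filter (fun i => x ∈ S i)).card + F'.card = F.card :=
      Finset.card_filter_add_card_filter_not _
    -- nat inequality: n * F'.card + F.card * b ≤ n * F.card
    have hnat : n * F'.card + F.card * b ≤ n * F.card := by
      calc n * F'.card + F.card * b
          ≤ n * F'.card + n * (F.filter (fun i => x ∈ S i)).card := by omega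
        _ = n * F.card := by
            rw [← Nat.mul_add, Nat.add_comm F'.card, hsplit]
    have hreal : (n : ℝ) * F'.card ≤ (F.card : ℝ) * ((n - b : ℕ) : ℝ) := by
      have hc : ((n - b : ℕ) : ℝ) = (n : ℝ) - b := by
        rw [Nat.cast_sub hbn]
      have := hnat
      have h2 : (n : ℝ) * F'.card + F.card * b ≤ n * F.card := by exact_mod_cast this
      rw [hc]; nlinarith
    have hF'lt : (F'.card : ℝ) * ((n - b : ℕ) : ℝ) ^ t < (n : ℝ) ^ t := by
      have hnpos : (0 : ℝ) < n := by exact_mod_cast hn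
      have hnbnn : (0 : ℝ) ≤ ((n - b : ℕ) : ℝ) := Nat.cast_nonneg _
      have key : (n : ℝ) * ((F'.card : ℝ) * ((n - b : ℕ) : ℝ) ^ t)
          ≤ (F.card : ℝ) * ((n - b : ℕ) : ℝ) ^ (t + 1) := by
        rw [pow_succ]
        calc (n : ℝ) * ((F'.card : ℝ) * ((n - b : ℕ) : ℝ) ^ t)
            = ((n : ℝ) * F'.card) * ((n - b : ℕ) : ℝ) ^ t := by ring
          _ ≤ ((F.card : ℝ) * ((n - b : ℕ) : ℝ)) * ((n - b : ℕ) : ℝ) ^ t := by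
              apply mul_le_mul_of_nonneg_right hreal (pow_nonneg hnbnn t)
          _ = (F.card : ℝ) * (((n - b : ℕ) : ℝ) ^ t * ((n - b : ℕ) : ℝ)) := by ring
      have : (n : ℝ) * ((F'.card : ℝ) * ((n - b : ℕ) : ℝ) ^ t) < (n : ℝ) * (n : ℝ) ^ t := by
        calc (n : ℝ) * ((F'.card : ℝ) * ((n - b : ℕ) : ℝ) ^ t)
            ≤ (F.card : ℝ) * ((n - b : ℕ) : ℝ) ^ (t + 1) := key
          _ < (n : ℝ) ^ (t + 1) := hF
          _ = (n : ℝ) * (n : ℝ) ^ t := by rw [pow_succ]; ring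
      exact lt_of_mul_lt_mul_left this (le_of_lt hnpos)
    obtain ⟨L', hL'card, hL'⟩ := ih F' hF'lt
    refine ⟨insert x L', ?_, ?_⟩
    · calc (insert x L').card ≤ L'.card + 1 := Finset.card_insert_le _ _
        _ ≤ t + 1 := by omega
    · intro i hi
      by_cases hxi : x ∈ S i
      · exact ⟨x, Finset.mem_inter.mpr ⟨hxi, Finset.mem_insert_self _ _⟩⟩
      · obtain ⟨y, hy⟩ := hL' i (Finset.mem_filter.mpr ⟨hi, hxi⟩)
        rw [Finset.mem_inter] at hy
        exact ⟨y, Finset.mem_inter.mpr ⟨hy.1, Finset.mem_insert_of_mem hy.2⟩⟩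

/-- Existence of a small leader set: given sets `S_1, …, S_n ⊆ {1,…,n}` of size `b`
with `i ∈ S_i`, where `(log₂ n)^{10} ≤ b ≤ n`, `n ≥ 10` and `15·ln n / ln b` is an even
integer at least 4, there is a set `L` of size at most `2·n·b^{−1/5}` hitting every `S_i`. -/
theorem exists_small_leader_set
    (n b : ℕ) (hn : 10 ≤ n) (hb : (Real.logb 2 n) ^ 10 ≤ (b : ℝ)) (hbn : b ≤ n)
    (hk : ∃ k : ℕ, Even k ∧ 4 ≤ k ∧ (k : ℝ) = 15 * Real.log n / Real.log b)
    (S : Fin n → Finset (Fin n)) (hScard : ∀ i, (S i).card = b) (hSmem : ∀ i, i ∈ S i) :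
    ∃ L : Finset (Fin n), (L.card : ℝ) ≤ 2 * (n : ℝ) * (b : ℝ) ^ (-(1/5) : ℝ) ∧
      ∀ i, (S i ∩ L).Nonempty := by
  have hn0 : 0 < n := by omega
  have hnR : (0 : ℝ) < n := by exact_mod_cast hn0
  set x := Real.logb 2 n with hxdef
  have hx3 : (3 : ℝ) ≤ x := by
    rw [hxdef, Real.le_logb_iff_rpow_le (by norm_num) hnR]
    have h8 : (2 : ℝ) ^ (3 : ℝ) = 8 := by
      rw [show (3:ℝ) = ((3:ℕ):ℝ) by norm_num, Real.rpow_natCast]; norm_num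
    have : (10 : ℝ) ≤ (n : ℝ) := by exact_mod_cast hn
    rw [h8]; linarith
  have hbR : (3 : ℝ) ^ 10 ≤ (b : ℝ) :=
    le_trans (pow_le_pow_left₀ (by norm_num) hx3 10) hb
  have hb0 : 0 < b := by
    have : (0 : ℝ) < b := lt_of_lt_of_le (by norm_num) hbR
    exact_mod_cast this
  have hbRpos : (0 : ℝ) < b := by exact_mod_cast hb0
  set c : ℝ := (b : ℝ) with hcdef
  set t : ℕ := ⌊2 * (n : ℝ) * c ^ (-(1/5) : ℝ)⌋₊ with htdef
  have hcpow : (0 : ℝ) < c ^ (-(1/5) : ℝ) := Real.rpow_pos_of_pos hbRpos _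
  have ht_le : (t : ℝ) ≤ 2 * (n : ℝ) * c ^ (-(1/5) : ℝ) :=
    Nat.floor_le (by positivity)
  have ht_gt : 2 * (n : ℝ) * c ^ (-(1/5) : ℝ) - 1 < t := Nat.sub_one_lt_floor _
  have hc45 : c * c ^ (-(1/5) : ℝ) = c ^ ((4:ℝ)/5) := by
    rw [show ((4:ℝ)/5) = 1 + (-(1/5)) by norm_num, Real.rpow_add hbRpos, Real.rpow_one]
  have hx0 : (0:ℝ) ≤ x := by linarith
  have hc45x : (x : ℝ) ^ 8 ≤ c ^ ((4:ℝ)/5) := by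
    have h1 : (x ^ 10 : ℝ) ^ ((4:ℝ)/5) ≤ c ^ ((4:ℝ)/5) :=
      Real.rpow_le_rpow (by positivity) hb (by norm_num)
    have h2 : (x ^ 10 : ℝ) ^ ((4:ℝ)/5) = x ^ 8 := by
      rw [← Real.rpow_natCast x 10, ← Real.rpow_mul hx0]
      rw [show ((10:ℕ):ℝ) * ((4:ℝ)/5) = ((8:ℕ):ℝ) by norm_num]
      rw [Real.rpow_natCast]
    rwa [h2] at h1
  have hlogn : Real.log n ≤ x := by
    rw [hxdef, Real.logb, le_div_iff₀ (by positivity)]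
    nlinarith [Real.log_nonneg (by exact_mod_cast (by omega : (1:ℕ) ≤ n) : (1:ℝ) ≤ (n:ℝ)),
      Real.log_two_lt_d9]
  have hcn : c ≤ (n : ℝ) := by rw [hcdef]; exact_mod_cast hbn
  have hkey : Real.log n < (t : ℝ) * c / n := by
    have h1 : (2 * (n : ℝ) * c ^ (-(1/5) : ℝ) - 1) * (c / n) ≤ (t : ℝ) * (c / n) :=
      mul_le_mul_of_nonneg_right (le_of_lt ht_gt) (by positivity)
    have h2 : (2 * (n : ℝ) * c ^ (-(1/5) : ℝ) - 1) * (c / n)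
        = 2 * c ^ ((4:ℝ)/5) - c / n := by
      field_simp
      nlinarith [hc45]
    have h3 : c / (n:ℝ) ≤ 1 := by rw [div_le_one hnR]; exact hcn
    have h4 : Real.log n < 2 * c ^ ((4:ℝ)/5) - 1 := by
      have h6 : (3:ℝ)^7 * x ≤ x ^ 7 * x :=
        mul_le_mul_of_nonneg_right (pow_le_pow_left₀ (by norm_num) hx3 7) hx0
      nlinarith
    calc Real.log n < 2 * c ^ ((4:ℝ)/5) - 1 := h4
      _ ≤ 2 * c ^ ((4:ℝ)/5) - c / n := by linarith
      _ = (2 * (n : ℝ) * c ^ (-(1/5) : ℝ) - 1) * (c / n) := h2.symm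
      _ ≤ (t : ℝ) * (c / n) := h1
      _ = (t : ℝ) * c / n := by ring
  -- main real inequality for greedy lemma
  have hmain : ((n : ℝ)) * ((n - b : ℕ) : ℝ) ^ t < (n : ℝ) ^ t := by
    have hnb : ((n - b : ℕ) : ℝ) = (n : ℝ) - c := by
      rw [Nat.cast_sub hbn]
    set r : ℝ := ((n : ℝ) - c) / n with hrdef
    have hr0 : 0 ≤ r := by
      apply div_nonneg (by linarith) (le_of_lt hnR)
    have hrexp : r ≤ Real.exp (-(c / n)) := by
      have := Real.add_one_le_exp (-(c / n))
      have hreq : r = 1 - c / n := by rw [hrdef]; field_simp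
      linarith
    have hrt : r ^ t ≤ Real.exp (-(↑t * c / n)) := by
      calc r ^ t ≤ Real.exp (-(c / n)) ^ t := pow_le_pow_left₀ hr0 hrexp t
        _ = Real.exp (-(↑t * c / n)) := by
          rw [← Real.exp_nat_mul]; ring_nf
    have hexp : Real.exp (-(↑t * c / n)) < 1 / n := by
      have : Real.exp (-(↑t * c / n)) < Real.exp (-(Real.log n)) :=
        Real.exp_lt_exp.mpr (by linarith)
      rwa [Real.exp_neg (Real.log (n:ℝ)), Real.exp_log hnR, ← one_div] at this
    have hlt : (n : ℝ) * r ^ t < 1 := by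
      calc (n : ℝ) * r ^ t ≤ (n : ℝ) * Real.exp (-(↑t * c / n)) :=
            mul_le_mul_of_nonneg_left hrt (le_of_lt hnR)
        _ < (n : ℝ) * (1 / n) := by
            exact mul_lt_mul_of_pos_left hexp hnR
        _ = 1 := by field_simp
    have hfact : ((n - b : ℕ) : ℝ) = r * n := by
      rw [hnb, hrdef]; field_simp
    calc (n : ℝ) * ((n - b : ℕ) : ℝ) ^ t = ((n:ℝ) * r ^ t) * (n:ℝ) ^ t := by
          rw [hfact, mul_pow]; ring
      _ < 1 * (n:ℝ) ^ t := by
          exact mul_lt_mul_of_pos_right hlt (by positivity)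
      _ = (n : ℝ) ^ t := one_mul _
  obtain ⟨L, hLcard, hLhit⟩ := greedy_hitting n b hn0 hbn S hScard t Finset.univ
    (by rwa [Finset.card_univ, Fintype.card_fin])
  refine ⟨L, ?_, fun i => hLhit i (Finset.mem_univ i)⟩
  calc (L.card : ℝ) ≤ (t : ℝ) := by exact_mod_cast hLcard
    _ ≤ 2 * (n : ℝ) * c ^ (-(1/5) : ℝ) := ht_le
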